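/- Let L be a 2-dimensional simplicial complex and L^𝔡 the Dranishnikov subdivision obtained by subdividing each edge into two edges and each 2-simplex into 13 triangles as in Dranishnikov's construction. Then L^𝔡 is a flag simplicial complex with no empty 4-cycle (no-□): every 4-cycle in the 1-skeleton of L^𝔡 has a pair of opposite vertices joined by an edge. -/

import Mathlib

/-- An abstract simplicial complex on a vertex type `V`. -/
structure ASC (V : Type) where
  faces : Set (Finset V)
  down_closed : ∀ s ∈ faces, ∀ t : Finset V, t ⊆ s → t.Nonempty → t ∈ faces
  nonempty_of_mem : ∀ s ∈ faces, s.Nonempty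

variable {V : Type} [DecidableEq V]

/-- A complex is flag if every nonempty set of vertices of the complex that is pairwise
joined by edges spans a simplex. -/
def ASC.Flag (K : ASC V) : Prop :=
  ∀ s : Finset V, s.Nonempty → (∀ x ∈ s, ({x} : Finset V) ∈ K.faces) →
    (∀ x ∈ s, ∀ y ∈ s, x ≠ y → ({x, y} : Finset V) ∈ K.faces) → s ∈ K.faces

/-- The no-□ condition: every 4-cycle in the 1-skeleton has a chord, i.e. no empty
4-cycle is a full subcomplex. -/
def ASC.NoSquare (K : ASC V) : Prop :=
  ∀ a b c d : V, a ≠ b → b ≠ c → c ≠ d → d ≠ a → a ≠ c → b ≠ d →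
    ({a, b} : Finset V) ∈ K.faces → ({b, c} : Finset V) ∈ K.faces →
    ({c, d} : Finset V) ∈ K.faces → ({d, a} : Finset V) ∈ K.faces →
    ({a, c} : Finset V) ∈ K.faces ∨ ({b, d} : Finset V) ∈ K.faces

/-- Vertices of the Dranishnikov subdivision: original vertices, midpoints of edges
(indexed by unordered pairs), and interior vertices of 2-simplices (indexed by a
2-simplex together with the corner it is close to). -/
abbrev DVert (V : Type) : Type := V ⊕ Sym2 V ⊕ (Finset V × V)

def va (a : V) : DVert V := Sum.inl a
def vm (e : Sym2 V) : DVert V := Sum.inr (Sum.inl e)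
def vi (t : Finset V) (x : V) : DVert V := Sum.inr (Sum.inr (t, x))

/-- The maximal faces of the Dranishnikov subdivision `L^𝔡` of a 2-complex `L`:
subdivided edges, and for each 2-simplex `t` the triangles of Dranishnikov's pattern
(two corner triangles at each corner, one triangle on each subdivided edge joining the
two nearby interior vertices, and the central triangle of interior vertices). -/
def draGen (L : ASC V) : Set (Finset (DVert V)) :=
  {q | (∃ a : V, ({a} : Finset V) ∈ L.faces ∧ q = {va a})
    ∨ (∃ a b : V, ({a, b} : Finset V) ∈ L.faces ∧ a ≠ b ∧
        (q = {va a, vm s(a, b)} ∨ q = {va b, vm s(a, b)}))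
    ∨ (∃ t ∈ L.faces, t.card = 3 ∧
        ((∃ x ∈ t, ∃ y ∈ t, x ≠ y ∧ q = {va x, vi t x, vm s(x, y)})
        ∨ (∃ x ∈ t, ∃ y ∈ t, x ≠ y ∧ q = {vi t x, vi t y, vm s(x, y)})
        ∨ (∃ x ∈ t, ∃ y ∈ t, ∃ z ∈ t, x ≠ y ∧ y ≠ z ∧ x ≠ z ∧
            q = {vi t x, vi t y, vi t z})))}

/-- The Dranishnikov subdivision `L^𝔡` of a 2-dimensional complex `L`. -/
def dra (L : ASC V) : ASC (DVert V) where
  faces := {q | q.Nonempty ∧ ∃ p ∈ draGen L, q ⊆ p}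
  down_closed := by
    rintro q ⟨-, p, hp, hqp⟩ t htq htne
    exact ⟨htne, p, hp, htq.trans hqp⟩
  nonempty_of_mem := fun q hq => hq.1

section Aux
variable {L : ASC V}

lemma sub_edge {t : Finset V} (ht : t ∈ L.faces) {x y : V} (hx : x ∈ t) (hy : y ∈ t) :
    ({x, y} : Finset V) ∈ L.faces := by
  refine L.down_closed t ht _ ?_ ⟨x, by simp⟩
  intro z hz
  simp only [Finset.mem_insert, Finset.mem_singleton] at hz
  rcases hz with rfl | rfl <;> assumption

lemma third {t : Finset V} (h3 : t.card = 3) {x : V} (hx : x ∈ t) : ∃ y ∈ t, y ≠ x := by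
  by_contra h
  push_neg at h
  have hsub : t ⊆ {x} := fun z hz => by simp [h z hz]
  have := Finset.card_le_card hsub
  simp [h3] at this

lemma gen_face {p q : Finset (DVert V)} (hp : p ∈ draGen L) (hq : q ⊆ p) (hne : q.Nonempty) :
    q ∈ (dra L).faces := ⟨hne, p, hp, hq⟩

lemma gen_edge1 {a b : V} (hab : ({a, b} : Finset V) ∈ L.faces) (hne : a ≠ b) :
    ({va a, vm s(a, b)} : Finset (DVert V)) ∈ draGen L :=
  Or.inr (Or.inl ⟨a, b, hab, hne, Or.inl rfl⟩)

lemma gen_T1 {t : Finset V} (ht : t ∈ L.faces) (h3 : t.card = 3) {x y : V}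
    (hx : x ∈ t) (hy : y ∈ t) (hxy : x ≠ y) :
    ({va x, vi t x, vm s(x, y)} : Finset (DVert V)) ∈ draGen L :=
  Or.inr (Or.inr ⟨t, ht, h3, Or.inl ⟨x, hx, y, hy, hxy, rfl⟩⟩)

lemma gen_T2 {t : Finset V} (ht : t ∈ L.faces) (h3 : t.card = 3) {x y : V}
    (hx : x ∈ t) (hy : y ∈ t) (hxy : x ≠ y) :
    ({vi t x, vi t y, vm s(x, y)} : Finset (DVert V)) ∈ draGen L :=
  Or.inr (Or.inr ⟨t, ht, h3, Or.inr (Or.inl ⟨x, hx, y, hy, hxy, rfl⟩)⟩)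

lemma gen_T3 {t : Finset V} (ht : t ∈ L.faces) (h3 : t.card = 3) {x y z : V}
    (hx : x ∈ t) (hy : y ∈ t) (hz : z ∈ t) (hxy : x ≠ y) (hyz : y ≠ z) (hxz : x ≠ z) :
    ({vi t x, vi t y, vi t z} : Finset (DVert V)) ∈ draGen L :=
  Or.inr (Or.inr ⟨t, ht, h3, Or.inr (Or.inr ⟨x, hx, y, hy, z, hz, hxy, hyz, hxz, rfl⟩)⟩)

-- edge membership constructors
lemma edge_va_vm_mem {a b : V} (hab : ({a, b} : Finset V) ∈ L.faces) (hne : a ≠ b) :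
    ({va a, vm s(a, b)} : Finset (DVert V)) ∈ (dra L).faces :=
  gen_face (gen_edge1 hab hne) (by simp) (by simp)

lemma edge_va_vi_mem {t : Finset V} (ht : t ∈ L.faces) (h3 : t.card = 3) {a : V} (ha : a ∈ t) :
    ({va a, vi t a} : Finset (DVert V)) ∈ (dra L).faces := by
  obtain ⟨y, hy, hya⟩ := third h3 ha
  exact gen_face (gen_T1 ht h3 ha hy hya.symm) (by simp [Finset.insert_subset_iff]) (by simp)

lemma edge_vm_vi_mem {t : Finset V} (ht : t ∈ L.faces) (h3 : t.card = 3) {x y : V}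
    (hx : x ∈ t) (hy : y ∈ t) (hxy : x ≠ y) :
    ({vm s(x, y), vi t x} : Finset (DVert V)) ∈ (dra L).faces :=
  gen_face (gen_T2 ht h3 hx hy hxy) (by simp [Finset.insert_subset_iff]) (by simp)

lemma edge_vi_vi_mem {t : Finset V} (ht : t ∈ L.faces) (h3 : t.card = 3) {x y : V}
    (hx : x ∈ t) (hy : y ∈ t) (hxy : x ≠ y) :
    ({vi t x, vi t y} : Finset (DVert V)) ∈ (dra L).faces :=
  gen_face (gen_T2 ht h3 hx hy hxy) (by simp [Finset.insert_subset_iff]) (by simp)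

end Aux
section Aux2
variable {L : ASC V}

lemma pair_sub {u w : DVert V} (h : ({u, w} : Finset (DVert V)) ∈ (dra L).faces) :
    ∃ p ∈ draGen L, u ∈ p ∧ w ∈ p := by
  obtain ⟨-, p, hp, hsub⟩ := h
  exact ⟨p, hp, hsub (by simp), hsub (by simp)⟩

lemma edge_va_va' {a b : V} (h : ({va a, va b} : Finset (DVert V)) ∈ (dra L).faces) :
    a = b := by
  obtain ⟨p, hp, h1, h2⟩ := pair_sub h
  rcases hp with ⟨x, -, rfl⟩ | ⟨x, y, hxy, hne, rfl | rfl⟩ |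
    ⟨u, hu, h3u, ⟨w, hw, y, hy, hne, rfl⟩ | ⟨w, hw, y, hy, hne, rfl⟩ |
      ⟨w, hw, y, hy, z, hz, hwy, hyz, hwz, rfl⟩⟩ <;>
  simp only [va, vm, vi, Finset.mem_insert, Finset.mem_singleton, Sum.inl.injEq,
    Sum.inr.injEq, Prod.mk.injEq, reduceCtorEq, or_false, false_or] at h1 h2 <;>
  first | exact h1.trans h2.symm | exact h1.elim

lemma edge_vm_vm' {e f : Sym2 V} (h : ({vm e, vm f} : Finset (DVert V)) ∈ (dra L).faces) :
    e = f := by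
  obtain ⟨p, hp, h1, h2⟩ := pair_sub h
  rcases hp with ⟨x, -, rfl⟩ | ⟨x, y, hxy, hne, rfl | rfl⟩ |
    ⟨u, hu, h3u, ⟨w, hw, y, hy, hne, rfl⟩ | ⟨w, hw, y, hy, hne, rfl⟩ |
      ⟨w, hw, y, hy, z, hz, hwy, hyz, hwz, rfl⟩⟩ <;>
  simp only [va, vm, vi, Finset.mem_insert, Finset.mem_singleton, Sum.inl.injEq,
    Sum.inr.injEq, Prod.mk.injEq, reduceCtorEq, or_false, false_or] at h1 h2 <;>
  first | exact h1.trans h2.symm | exact h1.elim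

lemma edge_va_vm' {a : V} {e : Sym2 V}
    (h : ({va a, vm e} : Finset (DVert V)) ∈ (dra L).faces) :
    ∃ b, a ≠ b ∧ e = s(a, b) ∧ ({a, b} : Finset V) ∈ L.faces := by
  obtain ⟨p, hp, h1, h2⟩ := pair_sub h
  rcases hp with ⟨x, -, rfl⟩ | ⟨x, y, hxy, hne, rfl | rfl⟩ |
    ⟨u, hu, h3u, ⟨w, hw, y, hy, hne, rfl⟩ | ⟨w, hw, y, hy, hne, rfl⟩ |
      ⟨w, hw, y, hy, z, hz, hwy, hyz, hwz, rfl⟩⟩ <;>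
  simp only [va, vm, vi, Finset.mem_insert, Finset.mem_singleton, Sum.inl.injEq,
    Sum.inr.injEq, Prod.mk.injEq, reduceCtorEq, or_false, false_or] at h1 h2
  · subst h1; subst h2; exact ⟨y, hne, rfl, hxy⟩
  · subst h1; subst h2; exact ⟨x, Ne.symm hne, Sym2.eq_swap, (Finset.pair_comm x a) ▸ hxy⟩
  · subst h1; subst h2; exact ⟨y, hne, rfl, sub_edge hu hw hy⟩

lemma edge_va_vi' {a : V} {t : Finset V} {x : V}
    (h : ({va a, vi t x} : Finset (DVert V)) ∈ (dra L).faces) :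
    x = a ∧ a ∈ t ∧ t ∈ L.faces ∧ t.card = 3 := by
  obtain ⟨p, hp, h1, h2⟩ := pair_sub h
  rcases hp with ⟨x', -, rfl⟩ | ⟨x', y, hxy, hne, rfl | rfl⟩ |
    ⟨u, hu, h3u, ⟨w, hw, y, hy, hne, rfl⟩ | ⟨w, hw, y, hy, hne, rfl⟩ |
      ⟨w, hw, y, hy, z, hz, hwy, hyz, hwz, rfl⟩⟩ <;>
  simp only [va, vm, vi, Finset.mem_insert, Finset.mem_singleton, Sum.inl.injEq,
    Sum.inr.injEq, Prod.mk.injEq, reduceCtorEq, or_false, false_or] at h1 h2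
  · obtain ⟨rfl, rfl⟩ := h2; subst h1; exact ⟨rfl, hw, hu, h3u⟩

lemma edge_vm_vi' {e : Sym2 V} {t : Finset V} {x : V}
    (h : ({vm e, vi t x} : Finset (DVert V)) ∈ (dra L).faces) :
    t ∈ L.faces ∧ t.card = 3 ∧ x ∈ t ∧ ∃ y ∈ t, y ≠ x ∧ e = s(x, y) := by
  obtain ⟨p, hp, h1, h2⟩ := pair_sub h
  rcases hp with ⟨x', -, rfl⟩ | ⟨x', y, hxy, hne, rfl | rfl⟩ |
    ⟨u, hu, h3u, ⟨w, hw, y, hy, hne, rfl⟩ | ⟨w, hw, y, hy, hne, rfl⟩ |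
      ⟨w, hw, y, hy, z, hz, hwy, hyz, hwz, rfl⟩⟩ <;>
  simp only [va, vm, vi, Finset.mem_insert, Finset.mem_singleton, Sum.inl.injEq,
    Sum.inr.injEq, Prod.mk.injEq, reduceCtorEq, or_false, false_or] at h1 h2
  · obtain ⟨rfl, rfl⟩ := h2; subst h1; exact ⟨hu, h3u, hw, y, hy, Ne.symm hne, rfl⟩
  · subst h1
    rcases h2 with ⟨rfl, rfl⟩ | ⟨rfl, rfl⟩
    · exact ⟨hu, h3u, hw, y, hy, Ne.symm hne, rfl⟩
    · exact ⟨hu, h3u, hy, w, hw, hne, Sym2.eq_swap⟩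

lemma edge_vi_vi' {t t' : Finset V} {x y : V}
    (h : ({vi t x, vi t' y} : Finset (DVert V)) ∈ (dra L).faces) :
    (t = t' ∧ x = y) ∨
      (t = t' ∧ x ≠ y ∧ x ∈ t ∧ y ∈ t ∧ t ∈ L.faces ∧ t.card = 3) := by
  obtain ⟨p, hp, h1, h2⟩ := pair_sub h
  rcases hp with ⟨x', -, rfl⟩ | ⟨x', y', hxy, hne, rfl | rfl⟩ |
    ⟨u, hu, h3u, ⟨w, hw, z, hz, hne, rfl⟩ | ⟨w, hw, z, hz, hne, rfl⟩ |
      ⟨w, hw, z, hz, v, hv, hwz, hzv, hwv, rfl⟩⟩ <;>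
  simp only [va, vm, vi, Finset.mem_insert, Finset.mem_singleton, Sum.inl.injEq,
    Sum.inr.injEq, Prod.mk.injEq, reduceCtorEq, or_false, false_or] at h1 h2
  · obtain ⟨rfl, rfl⟩ := h1; obtain ⟨rfl, rfl⟩ := h2; exact Or.inl ⟨rfl, rfl⟩
  · rcases h1 with ⟨rfl, rfl⟩ | ⟨rfl, rfl⟩ <;> rcases h2 with ⟨rfl, rfl⟩ | ⟨rfl, rfl⟩
    · exact Or.inl ⟨rfl, rfl⟩
    · exact Or.inr ⟨rfl, hne, hw, hz, hu, h3u⟩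
    · exact Or.inr ⟨rfl, Ne.symm hne, hz, hw, hu, h3u⟩
    · exact Or.inl ⟨rfl, rfl⟩
  · rcases h1 with ⟨rfl, rfl⟩ | ⟨rfl, rfl⟩ | ⟨rfl, rfl⟩ <;>
      rcases h2 with ⟨rfl, rfl⟩ | ⟨rfl, rfl⟩ | ⟨rfl, rfl⟩
    · exact Or.inl ⟨rfl, rfl⟩
    · exact Or.inr ⟨rfl, hwz, hw, hz, hu, h3u⟩
    · exact Or.inr ⟨rfl, hwv, hw, hv, hu, h3u⟩
    · exact Or.inr ⟨rfl, Ne.symm hwz, hz, hw, hu, h3u⟩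
    · exact Or.inl ⟨rfl, rfl⟩
    · exact Or.inr ⟨rfl, hzv, hz, hv, hu, h3u⟩
    · exact Or.inr ⟨rfl, Ne.symm hwv, hv, hw, hu, h3u⟩
    · exact Or.inr ⟨rfl, Ne.symm hzv, hv, hz, hu, h3u⟩
    · exact Or.inl ⟨rfl, rfl⟩

end Aux2
section Aux3
variable {L : ASC V}

structure Tri (L : ASC V) (u v w : DVert V) : Prop where
  nuv : u ≠ v
  nuw : u ≠ w
  nvw : v ≠ w
  euv : ({u, v} : Finset (DVert V)) ∈ (dra L).faces
  euw : ({u, w} : Finset (DVert V)) ∈ (dra L).faces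
  evw : ({v, w} : Finset (DVert V)) ∈ (dra L).faces

lemma Tri.rot {u v w : DVert V} (h : Tri L u v w) : Tri L v w u :=
  ⟨h.nvw, h.nuv.symm, h.nuw.symm, h.evw, (Finset.pair_comm u v) ▸ h.euv,
    (Finset.pair_comm u w) ▸ h.euw⟩

lemma Tri.swap {u v w : DVert V} (h : Tri L u v w) : Tri L u w v :=
  ⟨h.nuw, h.nuv, h.nvw.symm, h.euw, h.euv, (Finset.pair_comm v w) ▸ h.evw⟩

def Cov (L : ASC V) (u v w : DVert V) : Prop :=
  ∃ p ∈ draGen L, u ∈ p ∧ v ∈ p ∧ w ∈ p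

lemma Cov.rotInv {u v w : DVert V} (h : Cov L v w u) : Cov L u v w :=
  let ⟨p, hp, h1, h2, h3⟩ := h; ⟨p, hp, h3, h1, h2⟩

lemma Cov.rot2Inv {u v w : DVert V} (h : Cov L w u v) : Cov L u v w :=
  let ⟨p, hp, h1, h2, h3⟩ := h; ⟨p, hp, h2, h3, h1⟩

lemma Cov.swapInv {u v w : DVert V} (h : Cov L u w v) : Cov L u v w :=
  let ⟨p, hp, h1, h2, h3⟩ := h; ⟨p, hp, h1, h3, h2⟩

lemma Cov.swap12Inv {u v w : DVert V} (h : Cov L v u w) : Cov L u v w :=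
  let ⟨p, hp, h1, h2, h3⟩ := h; ⟨p, hp, h2, h1, h3⟩

lemma Cov.revInv {u v w : DVert V} (h : Cov L w v u) : Cov L u v w :=
  let ⟨p, hp, h1, h2, h3⟩ := h; ⟨p, hp, h3, h2, h1⟩

-- cores
lemma coreTriAA {a b : V} {w : DVert V} (h : Tri L (va a) (va b) w) :
    Cov L (va a) (va b) w :=
  absurd (congrArg va (edge_va_va' h.euv)) h.nuv

lemma coreTriMM {e f : Sym2 V} {w : DVert V} (h : Tri L (vm e) (vm f) w) :
    Cov L (vm e) (vm f) w :=
  absurd (congrArg vm (edge_vm_vm' h.euv)) h.nuv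

lemma coreTriAMI {a : V} {e : Sym2 V} {t : Finset V} {x : V}
    (h : Tri L (va a) (vm e) (vi t x)) : Cov L (va a) (vm e) (vi t x) := by
  obtain ⟨rfl, hat, ht, h3⟩ := edge_va_vi' h.euw
  obtain ⟨-, -, -, y, hy, hyx, rfl⟩ := edge_vm_vi' h.evw
  exact ⟨{va x, vi t x, vm s(x, y)}, gen_T1 ht h3 hat hy (Ne.symm hyx),
    by simp, by simp, by simp⟩

lemma coreTriAII {a : V} {t t' : Finset V} {x y : V}
    (h : Tri L (va a) (vi t x) (vi t' y)) : Cov L (va a) (vi t x) (vi t' y) := by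
  obtain ⟨rfl, -, -, -⟩ := edge_va_vi' h.euv
  obtain ⟨rfl, -, -, -⟩ := edge_va_vi' h.euw
  rcases edge_vi_vi' h.evw with ⟨rfl, -⟩ | ⟨-, hne, -⟩
  · exact absurd rfl h.nvw
  · exact absurd rfl hne

lemma coreTriMII {e : Sym2 V} {t t' : Finset V} {x y : V}
    (h : Tri L (vm e) (vi t x) (vi t' y)) : Cov L (vm e) (vi t x) (vi t' y) := by
  rcases edge_vi_vi' h.evw with ⟨rfl, rfl⟩ | ⟨rfl, hne, hx, hy, ht, h3⟩
  · exact absurd rfl h.nvw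
  · obtain ⟨-, -, -, u, hu, hux, he1⟩ := edge_vm_vi' h.euv
    obtain ⟨-, -, -, u', hu', huy, he2⟩ := edge_vm_vi' h.euw
    rcases Sym2.eq_iff.mp (he1.symm.trans he2) with ⟨h1, -⟩ | ⟨-, rfl⟩
    · exact absurd h1 hne
    · exact ⟨{vi t x, vi t u, vm s(x, u)}, gen_T2 ht h3 hx hy hne,
        by simp [he1], by simp, by simp⟩

lemma coreTriIII {t1 t2 t3 : Finset V} {x y z : V}
    (h : Tri L (vi t1 x) (vi t2 y) (vi t3 z)) : Cov L (vi t1 x) (vi t2 y) (vi t3 z) := by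
  rcases edge_vi_vi' h.euv with ⟨rfl, rfl⟩ | ⟨rfl, nxy, hx, hy, ht, h3⟩
  · exact absurd rfl h.nuv
  rcases edge_vi_vi' h.euw with ⟨rfl, rfl⟩ | ⟨rfl, nxz, -, hz, -, -⟩
  · exact absurd rfl h.nuw
  rcases edge_vi_vi' h.evw with ⟨-, rfl⟩ | ⟨-, nyz, -, -, -, -⟩
  · exact absurd rfl h.nvw
  exact ⟨{vi t1 x, vi t1 y, vi t1 z}, gen_T3 ht h3 hx hy hz nxy nyz nxz,
    by simp, by simp, by simp⟩

lemma tri_cov {u v w : DVert V} (h : Tri L u v w) : Cov L u v w := by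
  rcases u with a | e | ⟨t, x⟩ <;> rcases v with a' | e' | ⟨t', x'⟩ <;>
    rcases w with a'' | e'' | ⟨t'', x''⟩ <;>
  first
    | exact coreTriAA h
    | exact Cov.rotInv (coreTriAA h.rot)
    | exact Cov.rot2Inv (coreTriAA h.rot.rot)
    | exact Cov.swapInv (coreTriAA h.swap)
    | exact Cov.swap12Inv (coreTriAA h.rot.swap)
    | exact Cov.revInv (coreTriAA h.rot.rot.swap)
    | exact coreTriMM h
    | exact Cov.rotInv (coreTriMM h.rot)
    | exact Cov.rot2Inv (coreTriMM h.rot.rot)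
    | exact Cov.swapInv (coreTriMM h.swap)
    | exact Cov.swap12Inv (coreTriMM h.rot.swap)
    | exact Cov.revInv (coreTriMM h.rot.rot.swap)
    | exact coreTriAMI h
    | exact Cov.rotInv (coreTriAMI h.rot)
    | exact Cov.rot2Inv (coreTriAMI h.rot.rot)
    | exact Cov.swapInv (coreTriAMI h.swap)
    | exact Cov.swap12Inv (coreTriAMI h.rot.swap)
    | exact Cov.revInv (coreTriAMI h.rot.rot.swap)
    | exact coreTriAII h
    | exact Cov.rotInv (coreTriAII h.rot)
    | exact Cov.rot2Inv (coreTriAII h.rot.rot)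
    | exact Cov.swapInv (coreTriAII h.swap)
    | exact Cov.swap12Inv (coreTriAII h.rot.swap)
    | exact Cov.revInv (coreTriAII h.rot.rot.swap)
    | exact coreTriMII h
    | exact Cov.rotInv (coreTriMII h.rot)
    | exact Cov.rot2Inv (coreTriMII h.rot.rot)
    | exact Cov.swapInv (coreTriMII h.swap)
    | exact Cov.swap12Inv (coreTriMII h.rot.swap)
    | exact Cov.revInv (coreTriMII h.rot.rot.swap)
    | exact coreTriIII h

end Aux3
section Aux4
variable {L : ASC V}

lemma card2le {α : Type*} [DecidableEq α] (a b : α) : ({a, b} : Finset α).card ≤ 2 :=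
  le_trans (Finset.card_insert_le _ _) (by simp)

lemma card3le {α : Type*} [DecidableEq α] (a b c : α) : ({a, b, c} : Finset α).card ≤ 3 :=
  le_trans (Finset.card_insert_le _ _) (Nat.succ_le_succ (card2le b c))

lemma gen_card {p : Finset (DVert V)} (hp : p ∈ draGen L) : p.card ≤ 3 := by
  rcases hp with ⟨x, -, rfl⟩ | ⟨x, y, -, -, rfl | rfl⟩ |
    ⟨u, -, -, ⟨w, -, y, -, -, rfl⟩ | ⟨w, -, y, -, -, rfl⟩ |
      ⟨w, -, y, -, z, -, -, -, -, rfl⟩⟩ <;>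
  first
    | exact card3le _ _ _
    | exact le_trans (card2le _ _) (by norm_num)
    | simp

lemma no4 {u1 u2 u3 u4 : DVert V} (t123 : Tri L u1 u2 u3)
    (e14 : ({u1, u4} : Finset (DVert V)) ∈ (dra L).faces)
    (e24 : ({u2, u4} : Finset (DVert V)) ∈ (dra L).faces)
    (e34 : ({u3, u4} : Finset (DVert V)) ∈ (dra L).faces)
    (n14 : u1 ≠ u4) (n24 : u2 ≠ u4) (n34 : u3 ≠ u4) : False := by
  obtain ⟨p, hp, m1, m2, m3⟩ := tri_cov t123
  have n12 := t123.nuv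
  have n13 := t123.nuw
  have n23 := t123.nvw
  have hsub : ({u1, u2, u3} : Finset (DVert V)) ⊆ p := by
    simp [Finset.insert_subset_iff, m1, m2, m3]
  have hcard : ({u1, u2, u3} : Finset (DVert V)).card = 3 := by
    rw [Finset.card_insert_of_notMem (by simp [n12, n13]),
      Finset.card_insert_of_notMem (by simp [n23]), Finset.card_singleton]
  have hpe : ({u1, u2, u3} : Finset (DVert V)) = p :=
    Finset.eq_of_subset_of_card_le hsub (by rw [hcard]; exact gen_card hp)
  have hpc : p.card = 3 := by rw [← hpe, hcard]
  have adj : ∀ A ∈ p, ({A, u4} : Finset (DVert V)) ∈ (dra L).faces := by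
    intro A hA
    rw [← hpe] at hA
    simp only [Finset.mem_insert, Finset.mem_singleton] at hA
    rcases hA with rfl | rfl | rfl <;> assumption
  have nadj : ∀ A ∈ p, A ≠ u4 := by
    intro A hA
    rw [← hpe] at hA
    simp only [Finset.mem_insert, Finset.mem_singleton] at hA
    rcases hA with rfl | rfl | rfl <;> assumption
  clear hsub hcard hpe m1 m2 m3 e14 e24 e34 n14 n24 n34 t123 n12 n13 n23
  rcases hp with ⟨x, -, rfl⟩ | ⟨x, y, -, -, rfl | rfl⟩ |
    ⟨u, hu, h3u, ⟨w, hw, y, hy, hne, rfl⟩ | ⟨w, hw, y, hy, hne, rfl⟩ |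
      ⟨w, hw, y, hy, z, hz, hwy, hyz, hwz, rfl⟩⟩
  · simp at hpc
  · have := card2le (va x : DVert V) (vm s(x,y))
    omega
  · have := card2le (va y : DVert V) (vm s(x,y))
    omega
  -- T1 : p = {va w, vi u w, vm s(w,y)}
  · have a1 := adj (va w) (by simp)
    have a2 := adj (vi u w) (by simp)
    have a3 := adj (vm s(w,y)) (by simp)
    have d1 := nadj (va w) (by simp)
    have d2 := nadj (vi u w) (by simp)
    have d3 := nadj (vm s(w,y)) (by simp)
    rcases u4 with b | f | ⟨t', v⟩
    · exact d1 (congrArg va (edge_va_va' a1))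
    · exact d3 (congrArg vm (edge_vm_vm' a3))
    · obtain ⟨rfl, -, -, -⟩ := edge_va_vi' a1
      rcases edge_vi_vi' a2 with ⟨rfl, -⟩ | ⟨-, hne2, -⟩
      · exact d2 rfl
      · exact hne2 rfl
  -- T2 : p = {vi u w, vi u y, vm s(w,y)}
  · have a1 := adj (vi u w) (by simp)
    have a2 := adj (vi u y) (by simp)
    have a3 := adj (vm s(w,y)) (by simp)
    have d1 := nadj (vi u w) (by simp)
    have d2 := nadj (vi u y) (by simp)
    have d3 := nadj (vm s(w,y)) (by simp)
    rcases u4 with b | f | ⟨t', v⟩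
    · have a1' : ({va b, vi u w} : Finset (DVert V)) ∈ (dra L).faces := by
        rw [Finset.pair_comm]; exact a1
      obtain ⟨rfl, -, -, -⟩ := edge_va_vi' a1'
      have a2' : ({va w, vi u y} : Finset (DVert V)) ∈ (dra L).faces := by
        rw [Finset.pair_comm]; exact a2
      obtain ⟨h, -, -, -⟩ := edge_va_vi' a2'
      exact hne h.symm
    · exact d3 (congrArg vm (edge_vm_vm' a3))
    · rcases edge_vi_vi' a1 with ⟨rfl, rfl⟩ | ⟨rfl, nwv, -, hv, -, -⟩
      · exact d1 rfl
      rcases edge_vi_vi' a2 with ⟨-, rfl⟩ | ⟨-, nyv, -, -, -, -⟩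
      · exact d2 rfl
      obtain ⟨-, -, -, q, hq, hqv, heq⟩ := edge_vm_vi' a3
      rcases Sym2.eq_iff.mp heq with ⟨h', -⟩ | ⟨-, h'⟩
      · exact nwv h'
      · exact nyv h'
  -- T3 : p = {vi u w, vi u y, vi u z}
  · have a1 := adj (vi u w) (by simp)
    have a2 := adj (vi u y) (by simp)
    have a3 := adj (vi u z) (by simp)
    have d1 := nadj (vi u w) (by simp)
    have d2 := nadj (vi u y) (by simp)
    have d3 := nadj (vi u z) (by simp)
    rcases u4 with b | f | ⟨t', v⟩
    · have a1' : ({va b, vi u w} : Finset (DVert V)) ∈ (dra L).faces := by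
        rw [Finset.pair_comm]; exact a1
      obtain ⟨rfl, -, -, -⟩ := edge_va_vi' a1'
      have a2' : ({va w, vi u y} : Finset (DVert V)) ∈ (dra L).faces := by
        rw [Finset.pair_comm]; exact a2
      obtain ⟨h, -, -, -⟩ := edge_va_vi' a2'
      exact hwy h.symm
    · have a1' : ({vm f, vi u w} : Finset (DVert V)) ∈ (dra L).faces := by
        rw [Finset.pair_comm]; exact a1
      have a2' : ({vm f, vi u y} : Finset (DVert V)) ∈ (dra L).faces := by
        rw [Finset.pair_comm]; exact a2
      have a3' : ({vm f, vi u z} : Finset (DVert V)) ∈ (dra L).faces := by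
        rw [Finset.pair_comm]; exact a3
      obtain ⟨-, -, -, q1, hq1, hq1w, he1⟩ := edge_vm_vi' a1'
      obtain ⟨-, -, -, q2, hq2, hq2y, he2⟩ := edge_vm_vi' a2'
      obtain ⟨-, -, -, q3, hq3, hq3z, he3⟩ := edge_vm_vi' a3'
      rcases Sym2.eq_iff.mp (he1.symm.trans he2) with ⟨h', -⟩ | ⟨rfl, rfl⟩
      · exact hwy h'
      rcases Sym2.eq_iff.mp (he1.symm.trans he3) with ⟨h', -⟩ | ⟨-, h'⟩
      · exact hwz h'
      · exact hyz h'
    · rcases edge_vi_vi' a1 with ⟨rfl, rfl⟩ | ⟨rfl, nwv, -, hv, -, -⟩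
      · exact d1 rfl
      rcases edge_vi_vi' a2 with ⟨-, rfl⟩ | ⟨-, nyv, -, -, -, -⟩
      · exact d2 rfl
      rcases edge_vi_vi' a3 with ⟨-, rfl⟩ | ⟨-, nzv, -, -, -, -⟩
      · exact d3 rfl
      have hsub4 : ({w, y, z, v} : Finset V) ⊆ u := by
        simp [Finset.insert_subset_iff, hw, hy, hz, hv]
      have hc4 : ({w, y, z, v} : Finset V).card = 4 := by
        rw [Finset.card_insert_of_notMem (by simp [hwy, hwz, nwv]),
          Finset.card_insert_of_notMem (by simp [hyz, nyv]),
          Finset.card_insert_of_notMem (by simp [nzv]), Finset.card_singleton]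
      have := Finset.card_le_card hsub4
      omega

end Aux4
section Aux5
variable {L : ASC V}

structure Sq (L : ASC V) (a b c d : DVert V) : Prop where
  nab : a ≠ b
  nbc : b ≠ c
  ncd : c ≠ d
  nda : d ≠ a
  nac : a ≠ c
  nbd : b ≠ d
  eab : ({a, b} : Finset (DVert V)) ∈ (dra L).faces
  ebc : ({b, c} : Finset (DVert V)) ∈ (dra L).faces
  ecd : ({c, d} : Finset (DVert V)) ∈ (dra L).faces
  eda : ({d, a} : Finset (DVert V)) ∈ (dra L).faces
  nEac : ({a, c} : Finset (DVert V)) ∉ (dra L).faces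
  nEbd : ({b, d} : Finset (DVert V)) ∉ (dra L).faces

lemma Sq.rot {a b c d : DVert V} (h : Sq L a b c d) : Sq L b c d a :=
  ⟨h.nbc, h.ncd, h.nda, h.nab, h.nbd, h.nac.symm, h.ebc, h.ecd, h.eda, h.eab,
    h.nEbd, fun h' => h.nEac ((Finset.pair_comm c a) ▸ h')⟩

lemma Sq.refl {a b c d : DVert V} (h : Sq L a b c d) : Sq L a d c b :=
  ⟨h.nda.symm, h.ncd.symm, h.nbc.symm, h.nab.symm, h.nac, h.nbd.symm,
    (Finset.pair_comm d a) ▸ h.eda, (Finset.pair_comm c d) ▸ h.ecd,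
    (Finset.pair_comm b c) ▸ h.ebc, (Finset.pair_comm a b) ▸ h.eab,
    h.nEac, fun h' => h.nEbd ((Finset.pair_comm d b) ▸ h')⟩

lemma coreAdjAA {x y : V} {c d : DVert V} (h : Sq L (va x) (va y) c d) : False :=
  h.nab (congrArg va (edge_va_va' h.eab))

lemma coreAdjMM {e f : Sym2 V} {c d : DVert V} (h : Sq L (vm e) (vm f) c d) : False :=
  h.nab (congrArg vm (edge_vm_vm' h.eab))

lemma coreAA {x z : V} {b d : DVert V} (h : Sq L (va x) b (va z) d) : False := by
  have nxz : x ≠ z := fun h' => h.nac (congrArg va h')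
  rcases b with y | e | ⟨t, w⟩
  · exact h.nab (congrArg va (edge_va_va' h.eab))
  · obtain ⟨b1, hxb1, he1, -⟩ := edge_va_vm' h.eab
    have ebc' : ({va z, vm e} : Finset (DVert V)) ∈ (dra L).faces := by
      rw [Finset.pair_comm]; exact h.ebc
    obtain ⟨b2, hzb2, he2, -⟩ := edge_va_vm' ebc'
    rcases Sym2.eq_iff.mp (he1.symm.trans he2) with ⟨h', -⟩ | ⟨-, hb1z⟩
    · exact nxz h'
    have he1' : e = s(x, z) := by rw [he1, hb1z]
    rcases d with y' | f | ⟨t, w⟩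
    · have eda' : ({va x, va y'} : Finset (DVert V)) ∈ (dra L).faces := by
        rw [Finset.pair_comm]; exact h.eda
      exact h.nda (congrArg va (edge_va_va' eda').symm)
    · obtain ⟨c2, hzc2, hf2, -⟩ := edge_va_vm' h.ecd
      have eda' : ({va x, vm f} : Finset (DVert V)) ∈ (dra L).faces := by
        rw [Finset.pair_comm]; exact h.eda
      obtain ⟨c1, hxc1, hf1, -⟩ := edge_va_vm' eda'
      rcases Sym2.eq_iff.mp (hf2.symm.trans hf1) with ⟨h', -⟩ | ⟨-, hc2x⟩
      · exact nxz h'.symm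
      have hf2' : f = s(x, z) := by rw [hf2, hc2x]; exact Sym2.eq_swap
      exact h.nbd (congrArg vm (he1'.trans hf2'.symm))
    · have eda' : ({va x, vi t w} : Finset (DVert V)) ∈ (dra L).faces := by
        rw [Finset.pair_comm]; exact h.eda
      obtain ⟨hwx, -, -, -⟩ := edge_va_vi' eda'
      obtain ⟨hwz, -, -, -⟩ := edge_va_vi' h.ecd
      exact nxz (hwx.symm.trans hwz)
  · obtain ⟨hwx, -, -, -⟩ := edge_va_vi' h.eab
    have ebc' : ({va z, vi t w} : Finset (DVert V)) ∈ (dra L).faces := by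
      rw [Finset.pair_comm]; exact h.ebc
    obtain ⟨hwz, -, -, -⟩ := edge_va_vi' ebc'
    exact nxz (hwx.symm.trans hwz)

lemma coreAMIM {x : V} {e f : Sym2 V} {t : Finset V} {w : V}
    (h : Sq L (va x) (vm e) (vi t w) (vm f)) : False := by
  obtain ⟨b1, hxb1, he1, -⟩ := edge_va_vm' h.eab
  obtain ⟨ht, h3, hw, u, hu, huw, he2⟩ := edge_vm_vi' h.ebc
  have ecd' : ({vm f, vi t w} : Finset (DVert V)) ∈ (dra L).faces := by
    rw [Finset.pair_comm]; exact h.ecd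
  obtain ⟨-, -, -, u', hu', hu'w, hf2⟩ := edge_vm_vi' ecd'
  by_cases hwx : w = x
  · subst hwx
    exact h.nEac (edge_va_vi_mem ht h3 hw)
  · have eda' : ({va x, vm f} : Finset (DVert V)) ∈ (dra L).faces := by
      rw [Finset.pair_comm]; exact h.eda
    obtain ⟨c1, hxc1, hf1, -⟩ := edge_va_vm' eda'
    rcases Sym2.eq_iff.mp (he1.symm.trans he2) with ⟨h', -⟩ | ⟨-, rfl⟩
    · exact hwx h'.symm
    rcases Sym2.eq_iff.mp (hf1.symm.trans hf2) with ⟨h', -⟩ | ⟨-, rfl⟩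
    · exact hwx h'.symm
    -- he1 : e = s(x, w), hf1 : f = s(x, w)
    exact h.nbd (congrArg vm (he1.trans hf1.symm))

lemma coreIMIM {e f : Sym2 V} {t t' : Finset V} {w w' : V}
    (h : Sq L (vi t w) (vm e) (vi t' w') (vm f)) : False := by
  have eab' : ({vm e, vi t w} : Finset (DVert V)) ∈ (dra L).faces := by
    rw [Finset.pair_comm]; exact h.eab
  obtain ⟨ht, h3, hw, u, hu, huw, he1⟩ := edge_vm_vi' eab'
  obtain ⟨ht', h3', hw', u2, hu2, hu2w, he2⟩ := edge_vm_vi' h.ebc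
  have ecd' : ({vm f, vi t' w'} : Finset (DVert V)) ∈ (dra L).faces := by
    rw [Finset.pair_comm]; exact h.ecd
  obtain ⟨-, -, -, u3, hu3, hu3w, hf1⟩ := edge_vm_vi' ecd'
  obtain ⟨-, -, -, u4, hu4, hu4w, hf2⟩ := edge_vm_vi' h.eda
  have hef : e ≠ f := fun h' => h.nbd (congrArg vm h')
  by_cases hww : w = w'
  · subst hww
    have htt : t ≠ t' := fun h' => h.nac (by rw [h'])
    rcases Sym2.eq_iff.mp (he1.symm.trans he2) with ⟨-, h'⟩ | ⟨-, h'⟩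
    swap
    · exact huw h'
    subst h'
    rcases Sym2.eq_iff.mp (hf2.symm.trans hf1) with ⟨-, h''⟩ | ⟨-, h''⟩
    swap
    · exact hu4w h''
    subst h''
    have huu4 : u ≠ u4 := fun h' => hef (he1.trans (h' ▸ hf2.symm))
    have hsubt : ({w, u, u4} : Finset V) ⊆ t := by
      simp [Finset.insert_subset_iff, hw, hu, hu4]
    have hsubt' : ({w, u, u4} : Finset V) ⊆ t' := by
      simp [Finset.insert_subset_iff, hw', hu2, hu3]
    have hc3 : ({w, u, u4} : Finset V).card = 3 := by
      rw [Finset.card_insert_of_notMem (by simp [Ne.symm huw, Ne.symm hu4w]),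
        Finset.card_insert_of_notMem (by simp [huu4]), Finset.card_singleton]
    have h1 : ({w, u, u4} : Finset V) = t :=
      Finset.eq_of_subset_of_card_le hsubt (by omega)
    have h2 : ({w, u, u4} : Finset V) = t' :=
      Finset.eq_of_subset_of_card_le hsubt' (by omega)
    exact htt (h1.symm.trans h2)
  · rcases Sym2.eq_iff.mp (he1.symm.trans he2) with ⟨h', -⟩ | ⟨-, rfl⟩
    · exact hww h'
    rcases Sym2.eq_iff.mp (hf2.symm.trans hf1) with ⟨h', -⟩ | ⟨-, rfl⟩
    · exact hww h'
    exact hef (he1.trans hf2.symm)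

lemma coreMM {e f : Sym2 V} {a c : DVert V} (h : Sq L a (vm e) c (vm f)) : False := by
  rcases a with x | e' | ⟨t, w⟩
  · rcases c with z | g | ⟨t, w⟩
    · exact coreAA h
    · exact h.nbc (congrArg vm (edge_vm_vm' h.ebc))
    · exact coreAMIM h
  · exact h.nab (congrArg vm (edge_vm_vm' h.eab))
  · rcases c with z | g | ⟨t', w'⟩
    · exact coreAMIM h.rot.rot
    · exact h.nbc (congrArg vm (edge_vm_vm' h.ebc))
    · exact coreIMIM h

lemma coreAIII {x : V} {t1 t2 t3 : Finset V} {w1 w2 w3 : V}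
    (h : Sq L (va x) (vi t1 w1) (vi t2 w2) (vi t3 w3)) : False := by
  obtain ⟨h1x, -, -, -⟩ := edge_va_vi' h.eab
  have eda' : ({va x, vi t3 w3} : Finset (DVert V)) ∈ (dra L).faces := by
    rw [Finset.pair_comm]; exact h.eda
  obtain ⟨h3x, -, -, -⟩ := edge_va_vi' eda'
  rcases edge_vi_vi' h.ebc with ⟨rfl, rfl⟩ | ⟨rfl, -, -, -, -, -⟩
  · exact h.nbc rfl
  rcases edge_vi_vi' h.ecd with ⟨rfl, rfl⟩ | ⟨rfl, -, -, -, -, -⟩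
  · exact h.ncd rfl
  exact h.nbd (by rw [h1x, h3x])

lemma coreMIII {e : Sym2 V} {t1 t2 t3 : Finset V} {w1 w2 w3 : V}
    (h : Sq L (vm e) (vi t1 w1) (vi t2 w2) (vi t3 w3)) : False := by
  rcases edge_vi_vi' h.ebc with ⟨rfl, rfl⟩ | ⟨rfl, n12, hw1, hw2, ht1, h31⟩
  · exact h.nbc rfl
  rcases edge_vi_vi' h.ecd with ⟨rfl, rfl⟩ | ⟨rfl, n23, -, hw3, -, -⟩
  · exact h.ncd rfl
  have n13 : w1 ≠ w3 := fun h' => h.nbd (by rw [h'])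
  exact h.nEbd (edge_vi_vi_mem ht1 h31 hw1 hw3 n13)

lemma coreIIII {t0 t1 t2 t3 : Finset V} {w0 w1 w2 w3 : V}
    (h : Sq L (vi t0 w0) (vi t1 w1) (vi t2 w2) (vi t3 w3)) : False := by
  rcases edge_vi_vi' h.eab with ⟨rfl, rfl⟩ | ⟨rfl, n01, hw0, hw1, ht, h3⟩
  · exact h.nab rfl
  rcases edge_vi_vi' h.ebc with ⟨rfl, rfl⟩ | ⟨rfl, n12, -, hw2, -, -⟩
  · exact h.nbc rfl
  have n02 : w0 ≠ w2 := fun h' => h.nac (by rw [h'])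
  exact h.nEac (edge_vi_vi_mem ht h3 hw0 hw2 n02)

lemma coreAMII {x : V} {e : Sym2 V} {t t' : Finset V} {w w' : V}
    (h : Sq L (va x) (vm e) (vi t w) (vi t' w')) : False := by
  obtain ⟨b1, hxb1, he1, -⟩ := edge_va_vm' h.eab
  obtain ⟨ht, h3, hw, u, hu, huw, he2⟩ := edge_vm_vi' h.ebc
  rcases edge_vi_vi' h.ecd with ⟨rfl, rfl⟩ | ⟨rfl, nww', -, hw', -, -⟩
  · exact h.ncd rfl
  have eda' : ({va x, vi t w'} : Finset (DVert V)) ∈ (dra L).faces := by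
    rw [Finset.pair_comm]; exact h.eda
  obtain ⟨hw'x, hx, -, -⟩ := edge_va_vi' eda'
  by_cases hwx : w = x
  · refine h.nEac ?_
    rw [hwx]
    exact edge_va_vi_mem ht h3 (hwx ▸ hw)
  · rcases Sym2.eq_iff.mp (he1.symm.trans he2) with ⟨h', -⟩ | ⟨-, hb1w⟩
    · exact hwx h'.symm
    have he1' : e = s(x, w) := by rw [he1, hb1w]
    refine h.nEbd ?_
    rw [hw'x, he1']
    exact edge_vm_vi_mem ht h3 hx hw (fun h' => hwx h'.symm)

lemma coreAIMI {x : V} {e : Sym2 V} {t t' : Finset V} {w w' : V}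
    (h : Sq L (va x) (vi t w) (vm e) (vi t' w')) : False := by
  obtain ⟨hwx, hx, ht, h3⟩ := edge_va_vi' h.eab
  have ebc' : ({vm e, vi t w} : Finset (DVert V)) ∈ (dra L).faces := by
    rw [Finset.pair_comm]; exact h.ebc
  obtain ⟨-, -, hwt, u, hu, huw, he1⟩ := edge_vm_vi' ebc'
  refine h.nEac ?_
  rw [he1, hwx]
  exact edge_va_vm_mem (sub_edge ht (hwx ▸ hwt) hu)
    (fun h' => huw (h'.symm.trans hwx.symm))

end Aux5
section Aux6
variable {L : ASC V}

lemma sq_main {a b c d : DVert V} (h : Sq L a b c d) : False := by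
  rcases a with a1 | a2 | ⟨ta, xa⟩ <;> rcases b with b1 | b2 | ⟨tb, xb⟩ <;>
    rcases c with c1 | c2 | ⟨tc, xc⟩ <;> rcases d with d1 | d2 | ⟨td, xd⟩ <;>
  first
    | exact coreAdjAA h
    | exact coreAdjAA h.rot
    | exact coreAdjAA h.rot.rot
    | exact coreAdjAA h.rot.rot.rot
    | exact coreAdjMM h
    | exact coreAdjMM h.rot
    | exact coreAdjMM h.rot.rot
    | exact coreAdjMM h.rot.rot.rot
    | exact coreAA h
    | exact coreAA h.rot
    | exact coreMM h
    | exact coreMM h.rot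
    | exact coreIIII h
    | exact coreAIII h
    | exact coreAIII h.rot
    | exact coreAIII h.rot.rot
    | exact coreAIII h.rot.rot.rot
    | exact coreMIII h
    | exact coreMIII h.rot
    | exact coreMIII h.rot.rot
    | exact coreMIII h.rot.rot.rot
    | exact coreAMII h
    | exact coreAMII h.rot
    | exact coreAMII h.rot.rot
    | exact coreAMII h.rot.rot.rot
    | exact coreAMII h.refl
    | exact coreAMII h.refl.rot
    | exact coreAMII h.refl.rot.rot
    | exact coreAMII h.refl.rot.rot.rot
    | exact coreAIMI h
    | exact coreAIMI h.rot
    | exact coreAIMI h.rot.rot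
    | exact coreAIMI h.rot.rot.rot

end Aux6

theorem dra_flag_noSquare' (L : ASC V) :
    (dra L).Flag ∧ (dra L).NoSquare := by
  constructor
  · intro s hne hv he
    have hcard : s.card = 1 ∨ s.card = 2 ∨ s.card = 3 ∨ 4 ≤ s.card := by
      have := Finset.card_pos.mpr hne
      omega
    rcases hcard with h1 | h1 | h1 | h1
    · obtain ⟨x, rfl⟩ := Finset.card_eq_one.mp h1
      exact hv x (by simp)
    · obtain ⟨x, y, hxy, rfl⟩ := Finset.card_eq_two.mp h1
      exact he x (by simp) y (by simp) hxy
    · obtain ⟨x, y, z, hxy, hxz, hyz, rfl⟩ := Finset.card_eq_three.mp h1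
      have tri : Tri L x y z :=
        ⟨hxy, hxz, hyz, he x (by simp) y (by simp) hxy, he x (by simp) z (by simp) hxz,
          he y (by simp) z (by simp) hyz⟩
      obtain ⟨p, hp, m1, m2, m3⟩ := tri_cov tri
      exact ⟨by simp, p, hp, by simp [Finset.insert_subset_iff, m1, m2, m3]⟩
    · obtain ⟨s', hs'sub, hs'card⟩ := Finset.exists_subset_card_eq (s := s) (n := 4) h1
      rw [show (4 : ℕ) = 3 + 1 from rfl, Finset.card_eq_succ] at hs'card
      obtain ⟨u4, s'', hu4, rfl, h3'⟩ := hs'card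
      obtain ⟨x, y, z, hxy, hxz, hyz, rfl⟩ := Finset.card_eq_three.mp h3'
      have hx : x ∈ s := hs'sub (by simp)
      have hy : y ∈ s := hs'sub (by simp)
      have hz : z ∈ s := hs'sub (by simp)
      have hu : u4 ∈ s := hs'sub (by simp)
      have nxu : x ≠ u4 := fun h' => hu4 (by simp [h'])
      have nyu : y ≠ u4 := fun h' => hu4 (by simp [h'])
      have nzu : z ≠ u4 := fun h' => hu4 (by simp [h'])
      have tri : Tri L x y z :=
        ⟨hxy, hxz, hyz, he x hx y hy hxy, he x hx z hz hxz, he y hy z hz hyz⟩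
      exact (no4 tri (he x hx u4 hu nxu) (he y hy u4 hu nyu) (he z hz u4 hu nzu)
        nxu nyu nzu).elim
  · intro a b c d nab nbc ncd nda nac nbd eab ebc ecd eda
    by_contra hcon
    push_neg at hcon
    exact sq_main ⟨nab, nbc, ncd, nda, nac, nbd, eab, ebc, ecd, eda, hcon.1, hcon.2⟩

/-- The Dranishnikov subdivision of a 2-dimensional simplicial complex is a flag
simplicial complex satisfying the no-□ condition. -/
theorem dra_flag_noSquare (L : ASC V) (h2 : ∀ s ∈ L.faces, s.card ≤ 3) :
    (dra L).Flag ∧ (dra L).NoSquare := by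
  exact dra_flag_noSquare' L
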